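/- (Straszewicz) For a closed convex set C ⊆ ℝⁿ, the set of exposed points of C is dense in the set of extreme points of C. -/

import Mathlib

open RealInnerProductSpace

variable {n : ℕ}

/-- The polar of a set `K`. -/
def polar (K : Set (EuclideanSpace ℝ (Fin n))) : Set (EuclideanSpace ℝ (Fin n)) :=
  {y | ∀ x ∈ K, ⟪x, y⟫ ≤ 1}

/-- The set `K̂` of points of the polar attaining value 1 on `K`. -/
def hatK (K : Set (EuclideanSpace ℝ (Fin n))) : Set (EuclideanSpace ℝ (Fin n)) :=
  {y ∈ polar K | ∃ x ∈ K, ⟪x, y⟫ = 1}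

/-- A function is sublinear if it is convex and positively homogeneous. -/
def IsSublinear (σ : EuclideanSpace ℝ (Fin n) → ℝ) : Prop :=
  ConvexOn ℝ Set.univ σ ∧ ∀ t : ℝ, 0 < t → ∀ x, σ (t • x) = t * σ x

/-- The recession cone of `K`. -/
def recCone (K : Set (EuclideanSpace ℝ (Fin n))) : Set (EuclideanSpace ℝ (Fin n)) :=
  {x ∈ K | ∀ t : ℝ, 0 < t → t • x ∈ K}

/-- The support function of a set `T`, as `x ↦ sup_{y ∈ T} ⟪x, y⟫`. -/
noncomputable def suppFn (T : Set (EuclideanSpace ℝ (Fin n)))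
    (x : EuclideanSpace ℝ (Fin n)) : ℝ :=
  sSup ((fun y => ⟪x, y⟫) '' T)

lemma aux_isCompact_convexHull {s : Set (EuclideanSpace ℝ (Fin n))} (hs : IsCompact s) :
    IsCompact (convexHull ℝ s) := by
  classical
  rcases s.eq_empty_or_nonempty with rfl | ⟨x0, hx0⟩
  · simp [convexHull_empty]
  · set f : (Fin (n + 1) → ℝ) × (Fin (n + 1) → (EuclideanSpace ℝ (Fin n))) → (EuclideanSpace ℝ (Fin n)) :=
      fun wp => ∑ i, wp.1 i • wp.2 i with hf
    have hfc : Continuous f := by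
      apply continuous_finset_sum
      intro i _
      exact ((continuous_apply i).comp continuous_fst).smul
        ((continuous_apply i).comp continuous_snd)
    have hK : IsCompact ((stdSimplex ℝ (Fin (n + 1))) ×ˢ (Set.univ.pi fun _ : Fin (n+1) => s)) :=
      (isCompact_stdSimplex _ _).prod (isCompact_univ_pi fun _ => hs)
    have himg : convexHull ℝ s
        = f '' ((stdSimplex ℝ (Fin (n + 1))) ×ˢ (Set.univ.pi fun _ : Fin (n+1) => s)) := by
      apply Set.Subset.antisymm
      · intro x hx
        obtain ⟨ι, hι, z, w, hzs, hai, hwpos, hwsum, hx⟩ :=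
          eq_pos_convex_span_of_mem_convexHull hx
        have hcard : Fintype.card ι ≤ n + 1 := by
          refine hai.card_le_finrank_succ.trans ?_
          have h1 : Module.finrank ℝ ↥(vectorSpan ℝ (Set.range z)) ≤ n := by
            simpa [finrank_euclideanSpace_fin] using
              (Submodule.finrank_le (vectorSpan ℝ (Set.range z)))
          omega
        obtain ⟨e⟩ : Nonempty (ι ↪ Fin (n + 1)) := by
          rwa [Function.Embedding.nonempty_iff_card_le, Fintype.card_fin]
        set w' : Fin (n + 1) → ℝ := Function.extend e w 0 with hw'
        set z' : Fin (n + 1) → (EuclideanSpace ℝ (Fin n)) := Function.extend e z (fun _ => x0) with hz'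
        have hwe : ∀ i, w' (e i) = w i := fun i => e.injective.extend_apply w 0 i
        have hze : ∀ i, z' (e i) = z i := fun i => e.injective.extend_apply z _ i
        have hnotin : ∀ j ∉ Finset.univ.map e, w' j = 0 := by
          intro j hj
          rw [hw', Function.extend_apply']
          · rfl
          · rintro ⟨i, rfl⟩
            exact hj (Finset.mem_map.2 ⟨i, Finset.mem_univ _, rfl⟩)
        have hmap : ∀ g : Fin (n+1) → (EuclideanSpace ℝ (Fin n)), (∀ j ∉ Finset.univ.map e, g j = 0) →
            ∑ j, g j = ∑ i, g (e i) := by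
          intro g hg
          rw [← Finset.sum_map Finset.univ e g]
          exact (Finset.sum_subset (Finset.subset_univ _) fun j _ hj => hg j hj).symm
        have hmapR : ∀ g : Fin (n+1) → ℝ, (∀ j ∉ Finset.univ.map e, g j = 0) →
            ∑ j, g j = ∑ i, g (e i) := by
          intro g hg
          rw [← Finset.sum_map Finset.univ e g]
          exact (Finset.sum_subset (Finset.subset_univ _) fun j _ hj => hg j hj).symm
        refine ⟨(w', z'), ⟨⟨fun j => ?_, ?_⟩, fun j _ => ?_⟩, ?_⟩
        · show 0 ≤ w' j
          by_cases h : ∃ i, e i = j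
          · obtain ⟨i, rfl⟩ := h
            rw [hwe]; exact (hwpos i).le
          · rw [hw', Function.extend_apply' _ _ _ h]
            exact le_refl 0
        · show ∑ j, w' j = 1
          rw [hmapR w' hnotin]
          simp only [hwe]
          exact hwsum
        · show z' j ∈ s
          by_cases h : ∃ i, e i = j
          · obtain ⟨i, rfl⟩ := h
            rw [hze]; exact hzs ⟨_, rfl⟩
          · rw [hz', Function.extend_apply' _ _ _ h]; exact hx0
        · show ∑ j, w' j • z' j = x
          rw [hmap (fun j => w' j • z' j) (fun j hj => by show w' j • z' j = 0; rw [hnotin j hj, zero_smul])]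
          simp only [hwe, hze]
          exact hx
      · rintro x ⟨⟨w, p⟩, ⟨⟨hw0, hw1⟩, hp⟩, rfl⟩
        exact (convex_convexHull ℝ s).sum_mem (fun i _ => hw0 i) hw1
          (fun i _ => subset_convexHull ℝ s (hp i (Set.mem_univ i)))
    rw [himg]
    exact hK.image hfc

/-- A farthest point of a set is an exposed point. -/
lemma aux_farthest_exposed {A : Set (EuclideanSpace ℝ (Fin n))}
    {f z : EuclideanSpace ℝ (Fin n)} (hfA : f ∈ A)
    (hfar : ∀ c ∈ A, dist c z ≤ dist f z) : f ∈ Set.exposedPoints ℝ A := by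
  refine ⟨hfA, innerSL ℝ (f - z), fun y hy => ?_⟩
  have key : ‖y - z‖ ^ 2 = ‖y - f‖ ^ 2 + 2 * ⟪y - f, f - z⟫ + ‖f - z‖ ^ 2 := by
    have h := norm_add_sq_real (y - f) (f - z)
    rwa [sub_add_sub_cancel] at h
  have hinner : ⟪y - f, f - z⟫ = ⟪f - z, y⟫ - ⟪f - z, f⟫ := by
    rw [real_inner_comm, inner_sub_right]
  have hd : ‖y - z‖ ≤ ‖f - z‖ := by
    simpa [dist_eq_norm] using hfar y hy
  have hd2 : ‖y - z‖ ^ 2 ≤ ‖f - z‖ ^ 2 := by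
    have := norm_nonneg (y - z)
    nlinarith
  constructor
  · show ⟪f - z, y⟫ ≤ ⟪f - z, f⟫
    nlinarith [sq_nonneg ‖y - f‖]
  · intro hle
    have hle' : ⟪f - z, f⟫ ≤ ⟪f - z, y⟫ := hle
    have : ‖y - f‖ ^ 2 ≤ 0 := by nlinarith
    have : ‖y - f‖ = 0 := by nlinarith [norm_nonneg (y - f)]
    have := norm_sub_eq_zero_iff.mp this
    exact this

/-- An exposed point of `C ∩ closedBall x ε` lying in the open ball is exposed in `C`. -/
lemma aux_exposed_of_inter {C : Set (EuclideanSpace ℝ (Fin n))} (hCconv : Convex ℝ C)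
    {x f : EuclideanSpace ℝ (Fin n)} {ε : ℝ}
    (hf : f ∈ Set.exposedPoints ℝ (C ∩ Metric.closedBall x ε))
    (hfx : dist f x < ε) : f ∈ Set.exposedPoints ℝ C := by
  obtain ⟨⟨hfC, hfb⟩, l, hl⟩ := hf
  refine ⟨hfC, l, fun y hy => ?_⟩
  set t : ℝ := min 1 ((ε - dist f x) / (‖y - f‖ + 1)) with ht
  have hnorm1 : (0:ℝ) < ‖y - f‖ + 1 := by positivity
  have ht0 : 0 < t := by
    apply lt_min one_pos
    apply div_pos (by linarith) hnorm1
  have ht1 : t ≤ 1 := min_le_left _ _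
  set w : EuclideanSpace ℝ (Fin n) := f + t • (y - f) with hw
  have hwC : w ∈ C := by
    have := hCconv hfC hy (a := 1 - t) (b := t) (by linarith) ht0.le (by ring)
    convert this using 1
    rw [hw]
    module
  have hwb : w ∈ Metric.closedBall x ε := by
    rw [Metric.mem_closedBall]
    calc dist w x ≤ dist w f + dist f x := dist_triangle _ _ _
      _ ≤ t * ‖y - f‖ + dist f x := by
          rw [hw, dist_eq_norm, add_sub_cancel_left, norm_smul, Real.norm_eq_abs,
            abs_of_pos ht0]
      _ ≤ ε := by
          have h2 : t ≤ (ε - dist f x) / (‖y - f‖ + 1) := min_le_right _ _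
          have h3 : t * (‖y - f‖ + 1) ≤ ε - dist f x := by
            rw [← div_mul_cancel₀ (ε - dist f x) (ne_of_gt hnorm1)]
            exact mul_le_mul_of_nonneg_right h2 hnorm1.le
          nlinarith
  obtain ⟨hwle, hweq⟩ := hl w ⟨hwC, hwb⟩
  have hlw : l w = l f + t * (l y - l f) := by
    rw [hw]
    simp only [map_add, map_smul, map_sub, smul_eq_mul]
    try ring
  constructor
  · by_contra hcon
    push_neg at hcon
    have : l f < l w := by rw [hlw]; nlinarith
    linarith
  · intro hle
    have : l f ≤ l w := by rw [hlw]; nlinarith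
    have hwf : w = f := hweq this
    have : t • (y - f) = 0 := by
      have := hwf
      rw [hw] at this
      have h0 : f + t • (y - f) = f + 0 := by rw [this, add_zero]
      exact add_left_cancel h0
    have : y - f = 0 := by
      rcases smul_eq_zero.mp this with h | h
      · exact absurd h (ne_of_gt ht0)
      · exact h
    have : y = f := by rwa [sub_eq_zero] at this
    exact this

theorem stmt7 (C : Set (EuclideanSpace ℝ (Fin n)))
    (hCcl : IsClosed C) (hCconv : Convex ℝ C) :
    Set.extremePoints ℝ C ⊆ closure (Set.exposedPoints ℝ C) := by
  intro x hx
  rw [Metric.mem_closure_iff]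
  intro ε hε
  have hxC : x ∈ C := hx.1
  set C' := C ∩ Metric.closedBall x ε with hC'
  have hxC' : x ∈ C' := ⟨hxC, Metric.mem_closedBall_self hε.le⟩
  have hC'comp : IsCompact C' := (isCompact_closedBall x ε).inter_left hCcl
  have hC'conv : Convex ℝ C' := hCconv.inter (convex_closedBall x ε)
  set S := C' \ Metric.ball x (ε / 2) with hS
  have hScomp : IsCompact S := by
    rw [hS, Set.diff_eq]
    exact hC'comp.inter_right Metric.isOpen_ball.isClosed_compl
  set D := convexHull ℝ S with hD
  have hDcomp : IsCompact D := aux_isCompact_convexHull hScomp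
  have hxD : x ∉ D := by
    have hdiff : Convex ℝ (C \ {x}) :=
      ((hCconv.mem_extremePoints_iff_convex_diff).mp hx).2
    have hsub : S ⊆ C \ {x} := by
      rintro y ⟨⟨hyC, -⟩, hyb⟩
      refine ⟨hyC, ?_⟩
      simp only [Set.mem_singleton_iff]
      rintro rfl
      exact hyb (Metric.mem_ball_self (by linarith))
    intro hxc
    exact (convexHull_min hsub hdiff hxc).2 rfl
  -- choose the point z from which we take a farthest point
  have hz : ∃ z : EuclideanSpace ℝ (Fin n), ∀ d ∈ D, dist d z < dist x z := by
    rcases Set.eq_empty_or_nonempty D with hDe | hDne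
    · exact ⟨x, by simp [hDe]⟩
    · obtain ⟨l, s0, hls, hsx⟩ :=
        geometric_hahn_banach_closed_point (convex_convexHull ℝ S) hDcomp.isClosed hxD
      set v : EuclideanSpace ℝ (Fin n) :=
        (InnerProductSpace.toDual ℝ (EuclideanSpace ℝ (Fin n))).symm l with hv
      have hvy : ∀ y, ⟪v, y⟫ = l y := fun y =>
        InnerProductSpace.toDual_symm_apply
      set δ : ℝ := l x - s0 with hδ
      have hδ0 : 0 < δ := by rw [hδ]; linarith
      obtain ⟨M, hM⟩ := hDcomp.isBounded.subset_closedBall x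
      have hM0 : 0 ≤ max M 0 := le_max_right _ _
      set r : ℝ := (max M 0) ^ 2 / (2 * δ) + 1 with hr
      have hr0 : 0 < r := by positivity
      refine ⟨x - r • v, fun d hd => ?_⟩
      have hdx : ‖d - x‖ ≤ max M 0 := by
        have := hM hd
        rw [Metric.mem_closedBall, dist_eq_norm] at this
        exact this.trans (le_max_left _ _)
      have hld : l d < s0 := hls d hd
      have hkey : ‖d - (x - r • v)‖ ^ 2
          = ‖d - x‖ ^ 2 + 2 * (r * ⟪v, d - x⟫) + r ^ 2 * ‖v‖ ^ 2 := by
        have h1 : d - (x - r • v) = (d - x) + r • v := by abel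
        rw [h1, norm_add_sq_real, real_inner_smul_right, real_inner_comm, norm_smul,
          Real.norm_eq_abs, abs_of_pos hr0, mul_pow]
      have hiv : ⟪v, d - x⟫ < -δ := by
        rw [inner_sub_right, hvy, hvy, hδ]
        linarith
      have hxz : dist x (x - r • v) = r * ‖v‖ := by
        rw [dist_eq_norm]
        have : x - (x - r • v) = r • v := by abel
        rw [this, norm_smul, Real.norm_eq_abs, abs_of_pos hr0]
      have hdz2 : dist d (x - r • v) ^ 2 < (r * ‖v‖) ^ 2 := by
        rw [dist_eq_norm, hkey]
        have h2 : 2 * δ * r > (max M 0) ^ 2 := by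
          rw [hr]
          have : 2 * δ * ((max M 0) ^ 2 / (2 * δ)) = (max M 0) ^ 2 := by
            field_simp
          nlinarith
        have h5 : r * ⟪v, d - x⟫ < r * (-δ) := by
          exact mul_lt_mul_of_pos_left hiv hr0
        have h6 : ‖d - x‖ ^ 2 ≤ (max M 0) ^ 2 := by
          nlinarith [norm_nonneg (d - x)]
        linarith
      have h3 : dist d (x - r • v) < r * ‖v‖ :=
        lt_of_pow_lt_pow_left₀ 2 (by positivity) hdz2
      rw [hxz]
      exact h3
  obtain ⟨z, hz⟩ := hz
  obtain ⟨f, hfC', hfmax⟩ :=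
    hC'comp.exists_isMaxOn ⟨x, hxC'⟩
      (f := fun c => dist c z) (continuous_id.dist continuous_const).continuousOn
  rw [isMaxOn_iff] at hfmax
  have hfexp : f ∈ Set.exposedPoints ℝ C' := aux_farthest_exposed hfC' hfmax
  have hfD : f ∉ D := fun hfd => absurd (hfmax x hxC') (not_le.mpr (hz f hfd))
  have hfball : f ∈ Metric.ball x (ε / 2) := by
    by_contra hcon
    exact hfD (subset_convexHull ℝ S ⟨hfC', hcon⟩)
  have hfx : dist f x < ε := by
    have := Metric.mem_ball.mp hfball
    linarith
  exact ⟨f, aux_exposed_of_inter hCconv hfexp hfx, by rwa [dist_comm]⟩
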